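/- The Marginal Equal Share (MES) rule satisfies strong incentive to stay (S-STAY): each player's cumulative share is non-decreasing over time, and moreover if a newly arriving contributional player i (v(Sᵢ) > v(Sᵢ∖{i})) arrives, then every previously arrived player j with v(Sᵢ) > v(Sᵢ∖{j}) strictly increases their cumulative share at step i. -/

import Mathlib

variable {α : Type*} [DecidableEq α]

/-- The set of players arrived up to and including step `t`, under arrival order `π`. -/
def prefixSet {n : ℕ} (π : Fin n → α) (t : Fin n) : Finset α :=
  (Finset.Iic t).image π

/-- Amount the MES rule gives player `p` at step `t`: the marginal contribution of the
newly arrived player `π t` is split equally among all arrived players. -/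
noncomputable def mesStep {n : ℕ} (v : Finset α → ℝ) (π : Fin n → α) (t : Fin n) (p : α) : ℝ :=
  if p ∈ prefixSet π t then
    (v (prefixSet π t) - v ((prefixSet π t).erase (π t))) / ((prefixSet π t).card : ℝ)
  else 0

/-- Cumulative MES share of player `p` after step `t`. -/
noncomputable def mesCum {n : ℕ} (v : Finset α → ℝ) (π : Fin n → α) (p : α) (t : Fin n) : ℝ :=
  ∑ s ∈ Finset.Iic t, mesStep v π s p

/-- The MES rule satisfies S-STAY: cumulative shares are non-decreasing over time, and
when a contributional player `π t` arrives, every previously arrived player `π s`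
with `v (prefixSet π t) > v (prefixSet π t \ {π s})` strictly increases her cumulative
share between her own arrival step `s` and step `t`. -/
theorem mes_sstay {n : ℕ} (v : Finset α → ℝ) (π : Fin n → α)
    (hinj : Function.Injective π)
    (hnorm : v ∅ = 0)
    (hmono : ∀ S T : Finset α, S ⊆ T → v S ≤ v T) :
    (∀ (p : α) (s t : Fin n), s ≤ t → mesCum v π p s ≤ mesCum v π p t) ∧
    (∀ s t : Fin n, s < t →
      v (prefixSet π t) > v ((prefixSet π t).erase (π t)) →
      v (prefixSet π t) > v ((prefixSet π t).erase (π s)) →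
      mesCum v π (π s) t > mesCum v π (π s) s) := by
  have hstep : ∀ (t : Fin n) (p : α), 0 ≤ mesStep v π t p := by
    intro t p
    unfold mesStep
    split
    · apply div_nonneg
      · have := hmono _ _ (Finset.erase_subset (π t) (prefixSet π t))
        linarith
      · positivity
    · exact le_refl 0
  constructor
  · intro p s t hst
    apply Finset.sum_le_sum_of_subset_of_nonneg (Finset.Iic_subset_Iic.mpr hst)
    intro u _ _
    exact hstep u p
  · intro s t hst h1 h2
    have hmem : π s ∈ prefixSet π t :=
      Finset.mem_image.mpr ⟨s, Finset.mem_Iic.mpr hst.le, rfl⟩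
    have hpos : 0 < mesStep v π t (π s) := by
      unfold mesStep
      rw [if_pos hmem]
      apply div_pos
      · linarith
      · have : (prefixSet π t).Nonempty := ⟨π s, hmem⟩
        exact_mod_cast Finset.card_pos.mpr this
    have hsplit : Finset.Iic t = insert t (Finset.Iio t) := by
      ext u
      simp [Finset.mem_Iic, Finset.mem_Iio, le_iff_lt_or_eq, or_comm]
    have h3 : mesCum v π (π s) s ≤ ∑ u ∈ Finset.Iio t, mesStep v π u (π s) := by
      apply Finset.sum_le_sum_of_subset_of_nonneg
      · intro u hu
        simp only [Finset.mem_Iic, Finset.mem_Iio] at *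
        exact lt_of_le_of_lt hu hst
      · intro u _ _; exact hstep u (π s)
    have : mesCum v π (π s) t =
        mesStep v π t (π s) + ∑ u ∈ Finset.Iio t, mesStep v π u (π s) := by
      rw [mesCum, hsplit, Finset.sum_insert (by simp)]
    linarith
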